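/- Let K be a field, n ≥ 2, and let u, v ∈ Kⁿ be linearly independent. For i = 1, …, n−1 let B_i ∈ M_n(K) be the matrix with row i equal to u, row i+1 equal to v, and all other rows zero. Then every non-trivial linear combination of B_1, …, B_{n−1} has rank 2. -/

import Mathlib

/-- Over a field, given linearly independent vectors `u, v ∈ Kⁿ`, the matrices
`B i` (for `i = 0, …, n-2`) with row `i` equal to `u`, row `i+1` equal to `v`
and all other rows zero, have the property that every non-trivial linear
combination of them has rank `2`. -/
theorem nontrivial_combination_rank_two
    {K : Type*} [Field K] {n : ℕ} (hn : 2 ≤ n)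
    (u v : Fin n → K) (huv : LinearIndependent K ![u, v])
    (B : Fin (n - 1) → Matrix (Fin n) (Fin n) K)
    (hB : ∀ i : Fin (n - 1), ∀ j : Fin n,
      (B i) j = if (j : ℕ) = (i : ℕ) then u
        else if (j : ℕ) = (i : ℕ) + 1 then v else 0) :
    ∀ lam : Fin (n - 1) → K, lam ≠ 0 → (∑ i, lam i • B i).rank = 2 := by
  intro lam hlam
  classical
  set M : Matrix (Fin n) (Fin n) K := ∑ i, lam i • B i with hM
  have hrow : ∀ j : Fin n, M j = ∑ i, lam i • B i j := by
    intro j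
    funext k
    simp [hM, Matrix.sum_apply, Finset.sum_apply]
  -- minimal index with nonzero coefficient
  have hne : (Finset.univ.filter (fun i => lam i ≠ 0)).Nonempty := by
    by_contra h
    rw [Finset.not_nonempty_iff_eq_empty] at h
    apply hlam
    funext i
    by_contra hi
    have : i ∈ Finset.univ.filter (fun i => lam i ≠ 0) :=
      Finset.mem_filter.mpr ⟨Finset.mem_univ i, hi⟩
    simp [h] at this
  set i : Fin (n - 1) := (Finset.univ.filter (fun i => lam i ≠ 0)).min' hne with hidef
  have hi : lam i ≠ 0 := (Finset.mem_filter.mp (Finset.min'_mem _ hne)).2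
  have hmin : ∀ j : Fin (n - 1), lam j ≠ 0 → i ≤ j := by
    intro j hj
    exact Finset.min'_le _ _ (Finset.mem_filter.mpr ⟨Finset.mem_univ j, hj⟩)
  have hin : (i : ℕ) < n - 1 := i.isLt
  set ei : Fin n := ⟨(i : ℕ), by omega⟩ with heidef
  set si : Fin n := ⟨(i : ℕ) + 1, by omega⟩ with hsidef
  set S : Submodule K (Fin n → K) := Submodule.span K (Set.range M) with hSdef
  set T : Submodule K (Fin n → K) := Submodule.span K (Set.range ![u, v]) with hTdef
  have huT : u ∈ T := Submodule.subset_span ⟨0, rfl⟩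
  have hvT : v ∈ T := Submodule.subset_span ⟨1, rfl⟩
  -- row ei of M is lam i • u
  have hMei : M ei = lam i • u := by
    rw [hrow ei]
    rw [Finset.sum_eq_single i]
    · rw [hB i ei]
      simp [heidef]
    · intro b _ hb
      rw [hB b ei]
      have hb1 : (ei : ℕ) ≠ (b : ℕ) := by
        intro h
        exact hb (Fin.ext (by simpa [heidef] using h.symm))
      rw [if_neg hb1]
      by_cases hb2 : (ei : ℕ) = (b : ℕ) + 1
      · have hblt : b < i := by
          rw [Fin.lt_iff_val_lt_val]
          simp only [heidef] at hb2
          omega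
        have : lam b = 0 := by
          by_contra h
          exact absurd (hmin b h) (not_le.mpr hblt)
        simp [hb2, this]
      · simp [hb2]
    · intro h
      exact absurd (Finset.mem_univ i) h
  have hMeiS : M ei ∈ S := Submodule.subset_span ⟨ei, rfl⟩
  have huS : u ∈ S := by
    have : (lam i)⁻¹ • M ei ∈ S := S.smul_mem _ hMeiS
    rwa [hMei, smul_smul, inv_mul_cancel₀ hi, one_smul] at this
  -- row si of M is lam i • v plus a multiple of u
  have hsplit : ∑ b ∈ Finset.univ.erase i, lam b • B b si + lam i • B i si
      = ∑ b, lam b • B b si := Finset.sum_erase_add _ _ (Finset.mem_univ i)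
  have hBisi : B i si = v := by
    rw [hB i si]
    simp [hsidef]
  have hrestS : ∑ b ∈ Finset.univ.erase i, lam b • B b si ∈ S := by
    apply Submodule.sum_mem
    intro b hb
    have hbne : b ≠ i := (Finset.mem_erase.mp hb).1
    rw [hB b si]
    by_cases h1 : (si : ℕ) = (b : ℕ)
    · rw [if_pos h1]
      exact S.smul_mem _ huS
    · rw [if_neg h1]
      have h2 : (si : ℕ) ≠ (b : ℕ) + 1 := by
        intro h
        apply hbne
        apply Fin.ext
        simp only [hsidef] at h
        omega
      rw [if_neg h2]
      simp
  have hvS : v ∈ S := by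
    have hMsiS : M si ∈ S := Submodule.subset_span ⟨si, rfl⟩
    have hlamv : lam i • v ∈ S := by
      have : M si = ∑ b ∈ Finset.univ.erase i, lam b • B b si + lam i • v := by
        rw [hrow si, ← hsplit, hBisi]
      have h2 : lam i • v
          = M si - ∑ b ∈ Finset.univ.erase i, lam b • B b si := by
        rw [this]; abel
      rw [h2]
      exact S.sub_mem hMsiS hrestS
    have : (lam i)⁻¹ • (lam i • v) ∈ S := S.smul_mem _ hlamv
    rwa [smul_smul, inv_mul_cancel₀ hi, one_smul] at this
  -- S = T
  have hST : S = T := by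
    apply le_antisymm
    · rw [hSdef]
      apply Submodule.span_le.mpr
      rintro x ⟨j, rfl⟩
      rw [hrow j]
      apply Submodule.sum_mem
      intro b _
      apply T.smul_mem
      rw [hB b j]
      by_cases h1 : (j : ℕ) = (b : ℕ)
      · rw [if_pos h1]; exact huT
      · rw [if_neg h1]
        by_cases h2 : (j : ℕ) = (b : ℕ) + 1
        · rw [if_pos h2]; exact hvT
        · rw [if_neg h2]; exact T.zero_mem
    · rw [hTdef]
      apply Submodule.span_le.mpr
      rintro x ⟨k, rfl⟩
      fin_cases k
      · exact huS
      · exact hvS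
  rw [Matrix.rank_eq_finrank_span_row]
  have : Submodule.span K (Set.range M.row) = T := hST
  rw [this, hTdef, finrank_span_eq_card huv]
  simp
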